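/- arXiv:1409.2786 — 2 statements merged into one kernel-verified Lean document; each statement's English description precedes it below -/
import Mathlib

section
/- Along the boundary hyperplane between power cells, under a perturbation (x_i, w_i) ↦ (x_i + t x̃_i, w_i + t w̃_i) of the generators, a point x(t) remaining on the common boundary of cells j and k satisfies, at t = 0: the normal velocity V(x)·n_{jk} = [ (x - x_j)·x̃_j - (x - x_k)·x̃_k ]/d_{jk} + (w̃_j - w̃_k)/(2 d_{jk}), where n_{jk} = (x_k - x_j)/d_{jk} and d_{jk} = |x_k - x_j|. Precisely: if x(t) satisfies |x(t) - x_j - t x̃_j|² - w_j - t w̃_j = |x(t) - x_k - t x̃_k|² - w_k - t w̃_k for all t near 0 and x(t) is differentiable at 0 with x(0) = x, V = x'(0), then the displayed formula holds. -/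
open scoped RealInnerProductSpace

/-- Normal velocity of a point remaining on the boundary hyperplane between two
power cells under a perturbation of the generators. -/
theorem stmt15 {d : ℕ} (xj xk : EuclideanSpace ℝ (Fin d)) (hne : xj ≠ xk)
    (wj wk : ℝ) (xtj xtk : EuclideanSpace ℝ (Fin d)) (wtj wtk : ℝ)
    (djk : ℝ) (hd : djk = ‖xk - xj‖)
    (njk : EuclideanSpace ℝ (Fin d)) (hn : njk = djk⁻¹ • (xk - xj))
    (x : ℝ → EuclideanSpace ℝ (Fin d)) (V : EuclideanSpace ℝ (Fin d))
    (hx : HasDerivAt x V 0)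
    (heq : ∀ᶠ t in nhds (0 : ℝ),
      ‖x t - (xj + t • xtj)‖ ^ 2 - (wj + t * wtj)
        = ‖x t - (xk + t • xtk)‖ ^ 2 - (wk + t * wtk)) :
    ⟪V, njk⟫ = (⟪x 0 - xj, xtj⟫ - ⟪x 0 - xk, xtk⟫) / djk
        + (wtj - wtk) / (2 * djk) := by
  have hdpos : (0:ℝ) < djk := by
    rw [hd]; exact norm_pos_iff.mpr (sub_ne_zero.mpr (Ne.symm hne))
  have hd0 : djk ≠ 0 := ne_of_gt hdpos
  have hgj : HasDerivAt (fun t => x t - (xj + t • xtj)) (V - xtj) 0 := by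
    have h1 : HasDerivAt (fun t : ℝ => xj + t • xtj) xtj 0 := by
      simpa using ((hasDerivAt_id (0:ℝ)).smul_const xtj).const_add xj
    exact hx.sub h1
  have hgk : HasDerivAt (fun t => x t - (xk + t • xtk)) (V - xtk) 0 := by
    have h1 : HasDerivAt (fun t : ℝ => xk + t • xtk) xtk 0 := by
      simpa using ((hasDerivAt_id (0:ℝ)).smul_const xtk).const_add xk
    exact hx.sub h1
  set yj := x 0 - (xj + (0:ℝ) • xtj) with hyj
  set yk := x 0 - (xk + (0:ℝ) • xtk) with hyk
  have hfj : HasDerivAt (fun t => ‖x t - (xj + t • xtj)‖ ^ 2 - (wj + t * wtj))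
      ((⟪yj, V - xtj⟫ + ⟪V - xtj, yj⟫) - wtj) 0 := by
    have hi : HasDerivAt (fun t => ⟪x t - (xj + t • xtj), x t - (xj + t • xtj)⟫)
        (⟪yj, V - xtj⟫ + ⟪V - xtj, yj⟫) 0 := hgj.inner ℝ hgj
    have hw : HasDerivAt (fun t : ℝ => wj + t * wtj) wtj 0 := by
      simpa using ((hasDerivAt_id (0:ℝ)).mul_const wtj).const_add wj
    refine (hi.sub hw).congr_of_eventuallyEq ?_
    filter_upwards with t
    rw [← real_inner_self_eq_norm_sq]
    rfl
  have hfk : HasDerivAt (fun t => ‖x t - (xk + t • xtk)‖ ^ 2 - (wk + t * wtk))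
      ((⟪yk, V - xtk⟫ + ⟪V - xtk, yk⟫) - wtk) 0 := by
    have hi : HasDerivAt (fun t => ⟪x t - (xk + t • xtk), x t - (xk + t • xtk)⟫)
        (⟪yk, V - xtk⟫ + ⟪V - xtk, yk⟫) 0 := hgk.inner ℝ hgk
    have hw : HasDerivAt (fun t : ℝ => wk + t * wtk) wtk 0 := by
      simpa using ((hasDerivAt_id (0:ℝ)).mul_const wtk).const_add wk
    refine (hi.sub hw).congr_of_eventuallyEq ?_
    filter_upwards with t
    rw [← real_inner_self_eq_norm_sq]
    rfl
  have hDeq : (⟪yj, V - xtj⟫ + ⟪V - xtj, yj⟫) - wtj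
      = (⟪yk, V - xtk⟫ + ⟪V - xtk, yk⟫) - wtk :=
    ((hfk.congr_of_eventuallyEq heq).unique hfj).symm
  have hyj' : yj = x 0 - xj := by simp [hyj]
  have hyk' : yk = x 0 - xk := by simp [hyk]
  rw [hyj', hyk'] at hDeq
  have hcomm1 : ⟪V - xtj, x 0 - xj⟫ = ⟪x 0 - xj, V - xtj⟫ := real_inner_comm _ _
  have hcomm2 : ⟪V - xtk, x 0 - xk⟫ = ⟪x 0 - xk, V - xtk⟫ := real_inner_comm _ _
  rw [hcomm1, hcomm2] at hDeq
  -- hDeq : 2⟪x0-xj, V-xtj⟫ - wtj = 2⟪x0-xk, V-xtk⟫ - wtk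
  have hexp1 : ⟪x 0 - xj, V - xtj⟫ = ⟪x 0 - xj, V⟫ - ⟪x 0 - xj, xtj⟫ :=
    inner_sub_right _ _ _
  have hexp2 : ⟪x 0 - xk, V - xtk⟫ = ⟪x 0 - xk, V⟫ - ⟪x 0 - xk, xtk⟫ :=
    inner_sub_right _ _ _
  rw [hexp1, hexp2] at hDeq
  have hsub : (xk - xj : EuclideanSpace ℝ (Fin d)) = (x 0 - xj) - (x 0 - xk) := by
    abel
  have hgoalS : ⟪V, xk - xj⟫ = ⟪x 0 - xj, V⟫ - ⟪x 0 - xk, V⟫ := by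
    rw [hsub, inner_sub_right, real_inner_comm V (x 0 - xj), real_inner_comm V (x 0 - xk)]
  have key : ⟪V, xk - xj⟫
      = (⟪x 0 - xj, xtj⟫ - ⟪x 0 - xk, xtk⟫) + (wtj - wtk) / 2 := by
    rw [hgoalS]; linarith [hDeq]
  rw [hn, real_inner_smul_right, key]
  field_simp
end

section
/- For a sequence generated by a continuous fixed-point iteration z^{k+1} = T(z^k) in a metric space: if the sequence {z^k} has finitely many accumulation points, each accumulation point is a fixed point of T, T is continuous at these points, and the sequence is contained in a compact set, then z^k converges. -/
open Filter Metric Set Topology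

/-- Convergence of a fixed-point iteration with finitely many accumulation
points, all of which are fixed points of the continuous map `T`. -/
theorem stmt16 {X : Type*} [MetricSpace X] (T : X → X) (z : ℕ → X)
    (hz : ∀ k, z (k + 1) = T (z k))
    (A : Set X) (hA : A = {x | MapClusterPt x Filter.atTop z})
    (hfin : A.Finite)
    (hfix : ∀ x ∈ A, T x = x)
    (hcont : ∀ x ∈ A, ContinuousAt T x)
    (hcomp : IsCompact (closure (Set.range z))) :
    ∃ x, Filter.Tendsto z Filter.atTop (nhds x) := by
  classical
  have hzK : ∀ k, z k ∈ closure (Set.range z) :=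
    fun k => subset_closure (Set.mem_range_self k)
  -- every subsequence (along a map tendsto atTop) has a sub-subsequence converging
  -- to a point of A
  have hsub : ∀ g : ℕ → ℕ, Tendsto g atTop atTop →
      ∃ a ∈ A, ∃ ψ : ℕ → ℕ, StrictMono ψ ∧
        Tendsto (fun n => z (g (ψ n))) atTop (𝓝 a) := by
    intro g hg
    obtain ⟨a, _, ψ, hψ, hlim⟩ := hcomp.tendsto_subseq (fun n => hzK (g n))
    refine ⟨a, ?_, ψ, hψ, hlim⟩
    rw [hA]
    exact MapClusterPt.of_comp (hg.comp hψ.tendsto_atTop) hlim.mapClusterPt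
  -- the steps tend to zero
  have hstep : Tendsto (fun k => dist (z (k + 1)) (z k)) atTop (𝓝 0) := by
    by_contra h
    obtain ⟨δ, hδ, hfreq⟩ : ∃ δ > 0, ∃ᶠ k in atTop, δ ≤ dist (z (k + 1)) (z k) := by
      rw [Metric.tendsto_atTop] at h
      push_neg at h
      obtain ⟨δ, hδ, hfreq⟩ := h
      refine ⟨δ, hδ, frequently_atTop.2 fun N => ?_⟩
      obtain ⟨n, hn, hd⟩ := hfreq N
      rw [Real.dist_eq, sub_zero, abs_of_nonneg dist_nonneg] at hd
      exact ⟨n, hn, hd⟩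
    obtain ⟨φ, hφ, hφd⟩ := extraction_of_frequently_atTop hfreq
    obtain ⟨a, haA, ψ, hψ, hlim⟩ := hsub φ hφ.tendsto_atTop
    have h1 : Tendsto (fun n => z (φ (ψ n) + 1)) atTop (𝓝 a) := by
      have := (hcont a haA).tendsto.comp hlim
      rw [hfix a haA] at this
      simpa [Function.comp_def, hz] using this
    have h2 : Tendsto (fun n => dist (z (φ (ψ n) + 1)) (z (φ (ψ n)))) atTop (𝓝 0) := by
      simpa using h1.dist hlim
    have := (h2.eventually (eventually_lt_nhds hδ)).exists
    obtain ⟨n, hn⟩ := this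
    exact absurd (hφd (ψ n)) (not_le.2 hn)
  -- A is nonempty
  obtain ⟨a, haA, _⟩ := hsub id tendsto_id
  -- A is a singleton
  have hsingle : ∀ b ∈ A, b = a := by
    intro b hbA
    by_contra hba
    -- minimal distance from a to other points of A
    obtain ⟨c0, hc0, hc0min⟩ := Set.exists_min_image (A \ {a}) (dist a)
      (hfin.subset Set.diff_subset) ⟨b, hbA, hba⟩
    set ε := dist a c0 with hε
    have hεpos : 0 < ε := dist_pos.2 fun h => hc0.2 h.symm
    have hεmin : ∀ x ∈ A, x ≠ a → ε ≤ dist a x := fun x hx hxa =>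
      hc0min x ⟨hx, hxa⟩
    -- frequently near a
    have hfa : ∃ᶠ k in atTop, dist (z k) a < ε / 3 := by
      have hcl := haA
      rw [hA, Set.mem_setOf_eq, mapClusterPt_iff_frequently] at hcl
      exact (hcl _ (Metric.ball_mem_nhds a (by positivity : (0:ℝ) < ε / 3))).mono
        fun k hk => by simpa [Metric.mem_ball] using hk
    -- frequently far from a (near b)
    have hfb : ∃ᶠ k in atTop, 2 * ε / 3 ≤ dist (z k) a := by
      have hb := hbA
      rw [hA, Set.mem_setOf_eq, mapClusterPt_iff_frequently] at hb
      have hab : ε ≤ dist a b := hεmin b hbA hba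
      refine (hb _ (Metric.ball_mem_nhds b (by positivity : (0:ℝ) < ε / 3))).mono
        fun k hk => ?_
      rw [Metric.mem_ball] at hk
      have htri := dist_triangle a (z k) b
      rw [dist_comm (z k) a]
      linarith
    -- eventually small step
    obtain ⟨N0, hN0⟩ := (Metric.tendsto_atTop.1 hstep (ε / 3) (by positivity))
    have hN0' : ∀ n ≥ N0, dist (z (n + 1)) (z n) < ε / 3 := by
      intro n hn
      have := hN0 n hn
      rwa [Real.dist_eq, sub_zero, abs_of_nonneg dist_nonneg] at this
    -- the sequence frequently lies in the annulus
    have hann : ∃ᶠ k in atTop, ε / 3 ≤ dist (z k) a ∧ dist (z k) a ≤ 2 * ε / 3 := by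
      rw [frequently_atTop]
      intro N
      obtain ⟨k, hk, hka⟩ := frequently_atTop.1 hfa (max N N0)
      obtain ⟨m, hm, hma⟩ := frequently_atTop.1 hfb (k + 1)
      have hex : ∃ j, k < j ∧ ε / 3 ≤ dist (z j) a :=
        ⟨m, lt_of_lt_of_le (Nat.lt_succ_self k) hm, by linarith⟩
      have hkj0 : k < Nat.find hex := (Nat.find_spec hex).1
      have hj0d : ε / 3 ≤ dist (z (Nat.find hex)) a := (Nat.find_spec hex).2
      obtain ⟨p, hp⟩ : ∃ p, Nat.find hex = p + 1 := ⟨Nat.find hex - 1, by omega⟩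
      rw [hp] at hkj0 hj0d
      have hpk : k ≤ p := Nat.lt_succ_iff.1 hkj0
      have hpprev : dist (z p) a < ε / 3 := by
        rcases eq_or_lt_of_le hpk with h | h
        · rwa [← h]
        · have hmin := Nat.find_min hex (show p < Nat.find hex by omega)
          push_neg at hmin
          exact hmin h
      have hstep' : dist (z (p + 1)) (z p) < ε / 3 :=
        hN0' p (le_trans (le_trans (le_max_right N N0) hk) hpk)
      refine ⟨p + 1, le_trans (le_trans (le_max_left N N0) hk) (Nat.le_succ_of_le hpk),
        hj0d, ?_⟩
      calc dist (z (p + 1)) a ≤ dist (z (p + 1)) (z p) + dist (z p) a :=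
            dist_triangle _ _ _
        _ ≤ 2 * ε / 3 := by linarith
    -- extract a cluster point in the annulus: contradiction
    obtain ⟨φ, hφ, hφd⟩ := extraction_of_frequently_atTop hann
    obtain ⟨c, hcA, ψ, hψ, hlim⟩ := hsub φ hφ.tendsto_atTop
    have hdl : Tendsto (fun n => dist (z (φ (ψ n))) a) atTop (𝓝 (dist c a)) :=
      hlim.dist tendsto_const_nhds
    have h1 : ε / 3 ≤ dist c a :=
      le_of_tendsto_of_tendsto tendsto_const_nhds hdl
        (Eventually.of_forall fun n => (hφd (ψ n)).1)
    have h2 : dist c a ≤ 2 * ε / 3 :=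
      le_of_tendsto_of_tendsto hdl tendsto_const_nhds
        (Eventually.of_forall fun n => (hφd (ψ n)).2)
    have hc_ne : c ≠ a := fun h => by rw [h] at h1; simp at h1; linarith
    have := hεmin c hcA hc_ne
    rw [dist_comm] at this
    linarith
  -- convergence to a
  refine ⟨a, tendsto_of_subseq_tendsto fun ns hns => ?_⟩
  obtain ⟨c, hcA, ψ, hψ, hlim⟩ := hsub ns hns
  exact ⟨ψ, by rwa [hsingle c hcA] at hlim⟩
end
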